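/- arXiv:2209.07063 — 6 statements merged into one kernel-verified Lean document; each statement's English description precedes it below -/
import Mathlib

section
/- Let X ⊆ ℝⁿ and Y ⊆ ℝᵐ be closed sets and let f : ℝⁿ × ℝᵐ → ℝ be continuous. Let (x_k, y_k)_{k∈ℕ} be a sequence in X × Y generated by alternate convex search, i.e., for every k, y_{k+1} minimizes y ↦ f(x_k, y) over Y and x_{k+1} minimizes x ↦ f(x, y_{k+1}) over X. If the sequence (x_k, y_k) converges to a point (x*, y*) ∈ X × Y, then (x*, y*) is a partial optimum of f on X × Y, i.e., f(x*, y*) ≤ f(x, y*) for all x ∈ X and f(x*, y*) ≤ f(x*, y) for all y ∈ Y. -/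
open Filter Topology

/-- If a sequence generated by alternate convex search on a continuous function `f`
over closed sets `X ⊆ ℝⁿ`, `Y ⊆ ℝᵐ` converges, then its limit is a partial optimum. -/
theorem acs_limit_partial_optimum
    (n m : ℕ) (X : Set (Fin n → ℝ)) (Y : Set (Fin m → ℝ))
    (hX : IsClosed X) (hY : IsClosed Y)
    (f : (Fin n → ℝ) × (Fin m → ℝ) → ℝ) (hf : Continuous f)
    (x : ℕ → Fin n → ℝ) (y : ℕ → Fin m → ℝ)
    (hmem : ∀ k, x k ∈ X ∧ y k ∈ Y)
    (hy : ∀ k, y (k + 1) ∈ Y ∧ ∀ y' ∈ Y, f (x k, y (k + 1)) ≤ f (x k, y'))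
    (hx : ∀ k, x (k + 1) ∈ X ∧ ∀ x' ∈ X, f (x (k + 1), y (k + 1)) ≤ f (x', y (k + 1)))
    (xs : Fin n → ℝ) (ys : Fin m → ℝ) (hxs : xs ∈ X) (hys : ys ∈ Y)
    (hconv : Tendsto (fun k => (x k, y k)) atTop (𝓝 (xs, ys))) :
    (∀ x' ∈ X, f (xs, ys) ≤ f (x', ys)) ∧ (∀ y' ∈ Y, f (xs, ys) ≤ f (xs, y')) := by
  have hxc : Tendsto x atTop (𝓝 xs) := (continuous_fst.tendsto _).comp hconv
  have hyc : Tendsto y atTop (𝓝 ys) := (continuous_snd.tendsto _).comp hconv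
  have hxc' : Tendsto (fun k => x (k + 1)) atTop (𝓝 xs) :=
    hxc.comp (tendsto_add_atTop_nat 1)
  have hyc' : Tendsto (fun k => y (k + 1)) atTop (𝓝 ys) :=
    hyc.comp (tendsto_add_atTop_nat 1)
  constructor
  · intro x' hx'
    have t1 : Tendsto (fun k => f (x (k + 1), y (k + 1))) atTop (𝓝 (f (xs, ys))) :=
      (hf.tendsto _).comp (hxc'.prodMk_nhds hyc')
    have t2 : Tendsto (fun k => f (x', y (k + 1))) atTop (𝓝 (f (x', ys))) :=
      (hf.tendsto _).comp (tendsto_const_nhds.prodMk_nhds hyc')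
    exact le_of_tendsto_of_tendsto' t1 t2 (fun k => (hx k).2 x' hx')
  · intro y' hy'
    have t1 : Tendsto (fun k => f (x k, y (k + 1))) atTop (𝓝 (f (xs, ys))) :=
      (hf.tendsto _).comp (hxc.prodMk_nhds hyc')
    have t2 : Tendsto (fun k => f (x k, y')) atTop (𝓝 (f (xs, y'))) :=
      (hf.tendsto _).comp (hxc.prodMk_nhds tendsto_const_nhds)
    exact le_of_tendsto_of_tendsto' t1 t2 (fun k => (hy k).2 y' hy')
end

section
/- Let R : ℝᵈ → ℝ be convex, let ℓ_1, …, ℓ_n : ℝᵈ → ℝ be convex, nonnegative, and continuously differentiable, let λ > 0, and let f(·, λ) : [0,1] → ℝ be convex such that for every t ≥ 0 the function v ↦ v·t + f(v, λ) has a unique minimizer v*(t) over [0,1], and assume the map v* : [0,∞) → [0,1] is continuous. Define the SPL objective L(w, v) = R(w) + Σ_{i=1}^n (v_i ℓ_i(w) + f(v_i, λ)) on ℝᵈ × [0,1]ⁿ, and define F_λ(t) = ∫₀ᵗ v*(τ) dτ and the implicit SPL objective G_λ(w) = R(w) + Σ_{i=1}^n F_λ(ℓ_i(w)). Then: (i)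 the function h(w) = Σ_{i=1}^n F_λ(ℓ_i(w)) is differentiable with gradient ∇h(w) = Σ_{i=1}^n v*(ℓ_i(w)) ∇ℓ_i(w); and (ii) a pair (w₀, v̂) ∈ ℝᵈ × [0,1]ⁿ is a partial optimum of L if and only if v̂_i = v*(ℓ_i(w₀)) for every i and there exists a subgradient s of R at w₀ with s + Σ_{i=1}^n v*(ℓ_i(w₀)) ∇ℓ_i(w₀) = 0, i.e., if and only if v̂ = v*(ℓ(w₀)) and w₀ is a stationary point of the implicit objective G_λ. -/
open Set
open scoped RealInnerProductSpace

section Helpers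
open Filter Asymptotics MeasureTheory intervalIntegral
open scoped Topology

variable {E : Type*} [NormedAddCommGroup E] [InnerProductSpace ℝ E] [CompleteSpace E]

private lemma SPL.lineDeriv_of_gradient (q : E → ℝ) (g x : E) (u : E)
    (hq : HasGradientAt q g x) :
    HasDerivAt (fun θ : ℝ => q (x + θ • u)) ⟪g, u⟫ 0 := by
  have h1 : HasDerivAt (fun θ : ℝ => x + θ • u) u 0 := by
    simpa using ((hasDerivAt_id (0:ℝ)).smul_const u).const_add x
  have hq' : HasFDerivAt q ((InnerProductSpace.toDual ℝ E) g) (x + (0:ℝ) • u) := by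
    simpa using hq.hasFDerivAt
  have h2 := hq'.comp_hasDerivAt 0 h1
  simp only [InnerProductSpace.toDual_apply_apply] at h2
  exact h2

private lemma SPL.slope_tendsto (ψ : ℝ → ℝ) (m : ℝ) (h : HasDerivAt ψ m 0) :
    Tendsto (fun θ => (ψ θ - ψ 0) / θ) (𝓝[>] (0:ℝ)) (𝓝 m) := by
  have h2 : Tendsto (slope ψ 0) (𝓝[>] (0:ℝ)) (𝓝 m) :=
    (hasDerivAt_iff_tendsto_slope.1 h).mono_left
      (nhdsWithin_mono _ (fun x hx => ne_of_gt hx))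
  refine h2.congr (fun θ => ?_)
  simp [slope_def_field]

private lemma SPL.convexOn_grad_ineq (q : E → ℝ) (hconv : ConvexOn ℝ univ q) (g x : E)
    (hq : HasGradientAt q g x) (y : E) : q x + ⟪g, y - x⟫ ≤ q y := by
  set u := y - x with hu
  have ht := SPL.slope_tendsto _ _ (SPL.lineDeriv_of_gradient q g x u hq)
  have hb : ∀ᶠ θ in 𝓝[>] (0:ℝ),
      (q (x + θ • u) - q (x + (0:ℝ) • u)) / θ ≤ q y - q x := by
    filter_upwards [Ioo_mem_nhdsGT_of_mem (Set.mem_Ico.2 ⟨le_refl (0:ℝ), zero_lt_one⟩)]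
      with θ hθ
    obtain ⟨h0, h1⟩ := hθ
    have hcx : x + θ • u = (1 - θ) • x + θ • y := by
      rw [hu]; module
    have := hconv.2 (mem_univ x) (mem_univ y) (by linarith : (0:ℝ) ≤ 1 - θ) h0.le
      (by ring)
    rw [smul_eq_mul, smul_eq_mul] at this
    rw [div_le_iff₀ h0]
    rw [hcx]
    simp only [zero_smul, add_zero]
    nlinarith [this]
  have := le_of_tendsto ht hb
  simpa using by linarith [this]

private lemma SPL.subgrad_of_min (Rf q : E → ℝ) (hR : ConvexOn ℝ univ Rf) (g x : E)
    (hq : HasGradientAt q g x) (hmin : ∀ w, Rf x + q x ≤ Rf w + q w) (y : E) :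
    Rf x + ⟪-g, y - x⟫ ≤ Rf y := by
  set u := y - x with hu
  have ht := SPL.slope_tendsto _ _ (SPL.lineDeriv_of_gradient q g x u hq)
  have hb : ∀ᶠ θ in 𝓝[>] (0:ℝ),
      Rf x - Rf y ≤ (q (x + θ • u) - q (x + (0:ℝ) • u)) / θ := by
    filter_upwards [Ioo_mem_nhdsGT_of_mem (Set.mem_Ico.2 ⟨le_refl (0:ℝ), zero_lt_one⟩)]
      with θ hθ
    obtain ⟨h0, h1⟩ := hθ
    have hcx : x + θ • u = (1 - θ) • x + θ • y := by rw [hu]; module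
    have hRc := hR.2 (mem_univ x) (mem_univ y) (by linarith : (0:ℝ) ≤ 1 - θ) h0.le (by ring)
    rw [smul_eq_mul, smul_eq_mul] at hRc
    have hm := hmin (x + θ • u)
    rw [le_div_iff₀ h0]
    simp only [zero_smul, add_zero]
    rw [hcx] at hm ⊢
    nlinarith
  have := ge_of_tendsto ht hb
  have h2 : ⟪-g, u⟫ = -⟪g, u⟫ := by simp
  linarith [this, h2.le]

private lemma SPL.F_hasDerivAt (vstar : ℝ → ℝ) (hvcont : ContinuousOn vstar (Ici 0))
    {t : ℝ} (ht : 0 < t) :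
    HasDerivAt (fun u => ∫ τ in (0:ℝ)..u, vstar τ) (vstar t) t := by
  have hint : IntervalIntegrable vstar volume 0 t := by
    apply ContinuousOn.intervalIntegrable
    apply hvcont.mono
    rw [uIcc_of_le ht.le]
    exact fun x hx => hx.1
  have hmeas : StronglyMeasurableAtFilter vstar (𝓝 t) :=
    ⟨Ici 0, Ici_mem_nhds ht, (hvcont.mono le_rfl).aestronglyMeasurable measurableSet_Ici⟩
  have hct : ContinuousAt vstar t :=
    (hvcont t ht.le).continuousAt (Ici_mem_nhds ht)
  exact integral_hasDerivAt_right hint hmeas hct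

private lemma SPL.F_bounds (vstar : ℝ → ℝ) (hvcont : ContinuousOn vstar (Ici 0))
    (hvmem : ∀ t, 0 ≤ t → vstar t ∈ Icc (0:ℝ) 1) {t : ℝ} (ht : 0 ≤ t) :
    (0:ℝ) ≤ (∫ τ in (0:ℝ)..t, vstar τ) ∧ (∫ τ in (0:ℝ)..t, vstar τ) ≤ t := by
  have hint : IntervalIntegrable vstar volume 0 t := by
    apply ContinuousOn.intervalIntegrable
    apply hvcont.mono
    rw [uIcc_of_le ht]
    exact fun x hx => hx.1
  constructor
  · exact integral_nonneg ht (fun x hx => (hvmem x hx.1).1)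
  · calc (∫ τ in (0:ℝ)..t, vstar τ) ≤ ∫ _ in (0:ℝ)..t, (1:ℝ) := by
          apply integral_mono_on ht hint intervalIntegrable_const
          exact fun x hx => (hvmem x hx.1).2
       _ = t := by simp

private lemma SPL.comp_grad (vstar F : ℝ → ℝ) (hF : ∀ t, F t = ∫ τ in (0:ℝ)..t, vstar τ)
    (hvcont : ContinuousOn vstar (Ici 0))
    (hvmem : ∀ t, 0 ≤ t → vstar t ∈ Icc (0:ℝ) 1)
    (ℓ : E → ℝ) (hnn : ∀ w, 0 ≤ ℓ w) (hd : ContDiff ℝ 1 ℓ) (w : E) :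
    HasGradientAt (fun w => F (ℓ w)) (vstar (ℓ w) • gradient ℓ w) w := by
  have hdiff : DifferentiableAt ℝ ℓ w := (hd.differentiable one_ne_zero) w
  have hgl : HasGradientAt ℓ (gradient ℓ w) w := hdiff.hasGradientAt
  rcases lt_or_eq_of_le (hnn w) with ht | ht
  · have hFd : HasDerivAt F (vstar (ℓ w)) (ℓ w) := by
      have := SPL.F_hasDerivAt vstar hvcont ht
      rwa [show F = fun u => ∫ τ in (0:ℝ)..u, vstar τ from funext hF]
    have := hFd.comp_hasFDerivAt w hgl.hasFDerivAt
    rw [hasGradientAt_iff_hasFDerivAt, _root_.map_smul]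
    exact this
  · have hmin : IsLocalMin ℓ w := Filter.Eventually.of_forall (fun w' => ht ▸ hnn w')
    have hf0 : fderiv ℝ ℓ w = 0 := hmin.fderiv_eq_zero
    have hgl0 : gradient ℓ w = 0 := by
      rw [gradient, hf0, map_zero]
    rw [hgl0, smul_zero, hasGradientAt_iff_hasFDerivAt, map_zero]
    apply hasFDerivAt_iff_isLittleO.2
    have hF0 : F (ℓ w) = 0 := by rw [← ht, hF]; simp
    have hlo : (fun w' => ℓ w') =o[𝓝 w] fun w' => w' - w := by
      have h2 := (hf0 ▸ hdiff.hasFDerivAt).isLittleO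
      simpa [← ht] using h2
    have hbig : (fun w' => F (ℓ w') - F (ℓ w) - (0 : E →L[ℝ] ℝ) (w' - w)) =O[𝓝 w]
        fun w' => ℓ w' := by
      apply isBigO_of_le
      intro w'
      simp only [ContinuousLinearMap.zero_apply, sub_zero, hF0, Real.norm_eq_abs]
      obtain ⟨hb1, hb2⟩ := SPL.F_bounds vstar hvcont hvmem (hnn w')
      rw [hF (ℓ w'), abs_of_nonneg hb1, abs_of_nonneg (hnn w')]
      exact hb2
    exact hbig.trans_isLittleO hlo

end Helpers

/-- For the self-paced learning objective `L(w, v) = R(w) + ∑ i (vᵢ ℓᵢ(w) + f(vᵢ, λ))`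
with convex `R`, convex nonnegative `C¹` losses `ℓᵢ`, and a convex self-paced
regularizer `f(·, λ)` whose optimal-weight map `v*` is unique and continuous:
(i) `w ↦ ∑ i F_λ(ℓᵢ(w))` (with `F_λ(t) = ∫₀ᵗ v*(τ) dτ`) has gradient
`∑ i v*(ℓᵢ(w)) ∇ℓᵢ(w)`; and (ii) `(w₀, vhat)` is a partial optimum of `L` iff
`vhatᵢ = v*(ℓᵢ(w₀))` for all `i` and some subgradient `s` of `R` at `w₀` satisfies
`s + ∑ i v*(ℓᵢ(w₀)) ∇ℓᵢ(w₀) = 0`. -/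
theorem spl_partial_optimum_iff_stationary_implicit
    (d n : ℕ)
    (R : EuclideanSpace ℝ (Fin d) → ℝ) (hR : ConvexOn ℝ univ R)
    (ℓ : Fin n → EuclideanSpace ℝ (Fin d) → ℝ)
    (hℓconv : ∀ i, ConvexOn ℝ univ (ℓ i))
    (hℓnonneg : ∀ i w, 0 ≤ ℓ i w)
    (hℓdiff : ∀ i, ContDiff ℝ 1 (ℓ i))
    (lam : ℝ) (hlam : 0 < lam)
    (f : ℝ → ℝ) (hf : ConvexOn ℝ (Icc 0 1) f)
    (vstar : ℝ → ℝ)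
    (hvmem : ∀ t, 0 ≤ t → vstar t ∈ Icc (0 : ℝ) 1)
    (hvmin : ∀ t, 0 ≤ t → ∀ v ∈ Icc (0 : ℝ) 1,
      vstar t * t + f (vstar t) ≤ v * t + f v)
    (hvuniq : ∀ t, 0 ≤ t → ∀ v ∈ Icc (0 : ℝ) 1,
      v * t + f v = vstar t * t + f (vstar t) → v = vstar t)
    (hvcont : ContinuousOn vstar (Ici 0))
    (L : EuclideanSpace ℝ (Fin d) → (Fin n → ℝ) → ℝ)
    (hL : ∀ w v, L w v = R w + ∑ i, (v i * ℓ i w + f (v i)))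
    (F : ℝ → ℝ) (hF : ∀ t, F t = ∫ τ in (0 : ℝ)..t, vstar τ) :
    (∀ w, HasGradientAt (fun w => ∑ i, F (ℓ i w))
        (∑ i, vstar (ℓ i w) • gradient (ℓ i) w) w) ∧
    (∀ (w₀ : EuclideanSpace ℝ (Fin d)) (vhat : Fin n → ℝ),
      (∀ i, vhat i ∈ Icc (0 : ℝ) 1) →
      (((∀ w, L w₀ vhat ≤ L w vhat) ∧
        (∀ v : Fin n → ℝ, (∀ i, v i ∈ Icc (0 : ℝ) 1) → L w₀ vhat ≤ L w₀ v)) ↔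
       ((∀ i, vhat i = vstar (ℓ i w₀)) ∧
        ∃ s : EuclideanSpace ℝ (Fin d),
          (∀ w, R w₀ + ⟪s, w - w₀⟫ ≤ R w) ∧
          s + ∑ i, vstar (ℓ i w₀) • gradient (ℓ i) w₀ = 0))) := by
  constructor
  · intro w
    have h := fun i => SPL.comp_grad vstar F hF hvcont hvmem (ℓ i) (hℓnonneg i) (hℓdiff i) w
    rw [hasGradientAt_iff_hasFDerivAt, map_sum]
    exact HasFDerivAt.fun_sum (fun i _ => (h i).hasFDerivAt)
  · intro w₀ vhat hvhat
    constructor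
    · rintro ⟨hw, hv⟩
      have ha : ∀ i, vhat i = vstar (ℓ i w₀) := by
        intro i
        have htnn : 0 ≤ ℓ i w₀ := hℓnonneg i w₀
        set v := Function.update vhat i (vstar (ℓ i w₀)) with hvdef
        have hvm : ∀ j, v j ∈ Icc (0:ℝ) 1 := by
          intro j
          by_cases hji : j = i
          · subst hji; rw [hvdef, Function.update_self]; exact hvmem _ htnn
          · rw [hvdef, Function.update_of_ne hji]; exact hvhat j
        have hle := hv v hvm
        rw [hL, hL] at hle
        have hsle : ∑ j, (vhat j * ℓ j w₀ + f (vhat j))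
            ≤ ∑ j, (v j * ℓ j w₀ + f (v j)) := by linarith
        have herase : ∀ j ∈ Finset.univ.erase i,
            (vhat j * ℓ j w₀ + f (vhat j)) = (v j * ℓ j w₀ + f (v j)) := by
          intro j hj
          rw [hvdef, Function.update_of_ne (Finset.mem_erase.1 hj).1]
        rw [← Finset.sum_erase_add _ _ (Finset.mem_univ i),
          ← Finset.sum_erase_add _ _ (Finset.mem_univ i),
          Finset.sum_congr rfl herase] at hsle
        have hile : vhat i * ℓ i w₀ + f (vhat i) ≤ v i * ℓ i w₀ + f (v i) := by linarith
        rw [hvdef, Function.update_self] at hile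
        exact hvuniq _ htnn (vhat i) (hvhat i)
          (le_antisymm hile (hvmin _ htnn (vhat i) (hvhat i)))
      refine ⟨ha, ?_⟩
      set g := ∑ i, vstar (ℓ i w₀) • gradient (ℓ i) w₀ with hg
      have hq : HasGradientAt (fun w => ∑ i, vhat i * ℓ i w) g w₀ := by
        rw [hasGradientAt_iff_hasFDerivAt, hg, map_sum]
        apply HasFDerivAt.fun_sum
        intro i _
        have h1 := ((hℓdiff i).differentiable one_ne_zero w₀).hasGradientAt.hasFDerivAt
        have h2 := h1.const_mul (vhat i)
        rw [← ha i, _root_.map_smul]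
        exact h2
      have hmin : ∀ w, R w₀ + (∑ i, vhat i * ℓ i w₀) ≤ R w + (∑ i, vhat i * ℓ i w) := by
        intro w
        have hww := hw w
        rw [hL, hL, Finset.sum_add_distrib, Finset.sum_add_distrib] at hww
        linarith
      exact ⟨-g, fun w => SPL.subgrad_of_min R (fun w => ∑ i, vhat i * ℓ i w) hR g w₀
        hq hmin w, neg_add_cancel g⟩
    · rintro ⟨ha, s, hs, hsum⟩
      constructor
      · intro w
        rw [hL, hL]
        have hgi : ∀ i, ℓ i w₀ + ⟪gradient (ℓ i) w₀, w - w₀⟫ ≤ ℓ i w :=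
          fun i => SPL.convexOn_grad_ineq (ℓ i) (hℓconv i) _ w₀
            ((hℓdiff i).differentiable one_ne_zero w₀).hasGradientAt w
        have key : ⟪s + ∑ i, vstar (ℓ i w₀) • gradient (ℓ i) w₀, w - w₀⟫ = 0 := by
          rw [hsum, inner_zero_left]
        rw [inner_add_left, sum_inner] at key
        have hterm : ∀ i, vhat i * ℓ i w₀ + vhat i * ⟪gradient (ℓ i) w₀, w - w₀⟫
            ≤ vhat i * ℓ i w := by
          intro i
          nlinarith [hgi i, (hvhat i).1]
        have hsum2 : (∑ i, vhat i * ℓ i w₀) + ∑ i, vhat i * ⟪gradient (ℓ i) w₀, w - w₀⟫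
            ≤ ∑ i, vhat i * ℓ i w := by
          rw [← Finset.sum_add_distrib]
          exact Finset.sum_le_sum (fun i _ => hterm i)
        have hrw : ∑ i, vhat i * ⟪gradient (ℓ i) w₀, w - w₀⟫
            = ∑ i, ⟪vstar (ℓ i w₀) • gradient (ℓ i) w₀, w - w₀⟫ :=
          Finset.sum_congr rfl (fun i _ => by rw [ha i, real_inner_smul_left])
        have hsub := hs w
        rw [Finset.sum_add_distrib, Finset.sum_add_distrib]
        rw [hrw] at hsum2
        linarith
      · intro v hvm
        rw [hL, hL]
        have hterm : ∀ i, vhat i * ℓ i w₀ + f (vhat i) ≤ v i * ℓ i w₀ + f (v i) := by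
          intro i
          rw [ha i]
          exact hvmin _ (hℓnonneg i w₀) _ (hvm i)
        have := Finset.sum_le_sum (fun i (_ : i ∈ Finset.univ) => hterm i)
        linarith
end

section
/- Let n be a positive integer, let H be a finite-dimensional real inner product space, let φ_1, …, φ_n ∈ H, let y_1, …, y_n ∈ {−1, 1}, and let c_1, …, c_n ≥ 0. Define J(w, b) = (1/2)‖w‖² + Σ_{i=1}^n c_i · max(0, 1 − y_i(⟨φ_i, w⟩ + b)) for (w, b) ∈ H × ℝ. Then (ŵ, b̂) minimizes J over H × ℝ if and only if there exists α ∈ ℝⁿ such that ŵ = Σ_{i=1}^n α_i y_i φ_i, Σ_{i=1}^n α_i y_i = 0, and for each i, setting g_i = 1 − y_i(⟨φ_i, ŵ⟩ + b̂): α_i = 0 whenever g_i < 0, α_i = c_i whenever g_i > 0, and 0 ≤ α_i ≤ c_i whenever g_i = 0. -/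
open scoped RealInnerProductSpace

lemma sep_lemma {F : Type*} [NormedAddCommGroup F] [InnerProductSpace ℝ F]
    {K : Set F} (hK : IsCompact K) (hKc : Convex ℝ K) (hne : K.Nonempty)
    {x : F} (hx : x ∉ K) :
    ∃ v : F, 0 < ‖v‖ ^ 2 ∧ ∀ s ∈ K, ‖v‖ ^ 2 ≤ ⟪v, x - s⟫ := by
  obtain ⟨p, hpK, hp⟩ := exists_norm_eq_iInf_of_complete_convex hne hK.isComplete hKc x
  have hvar := (norm_eq_iInf_iff_real_inner_le_zero hKc hpK).mp hp
  refine ⟨x - p, ?_, ?_⟩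
  · have : x - p ≠ 0 := sub_ne_zero.mpr (fun h => hx (h ▸ hpK))
    have h0 : 0 < ‖x - p‖ := norm_pos_iff.mpr this
    positivity
  · intro s hs
    have h1 := hvar s hs
    have : ⟪x - p, x - s⟫ = ‖x - p‖ ^ 2 - ⟪x - p, s - p⟫ := by
      rw [← real_inner_self_eq_norm_sq, ← inner_sub_right]
      congr 1
      abel
    rw [this]
    linarith

lemma step_size {n : ℕ} (hn : 0 < n) (g t : Fin n → ℝ) (ε M : ℝ) (hε2 : 0 < ε) (hM : 0 ≤ M) :
    ∃ s : ℝ, 0 < s ∧ (∀ i, g i ≠ 0 → s * |t i| < |g i|) ∧ s * M < ε := by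
  have hne' : (Finset.univ : Finset (Fin n)).Nonempty := ⟨⟨0, hn⟩, Finset.mem_univ _⟩
  set δ : Fin n → ℝ := fun i => if g i = 0 then 1 else |g i| / (|t i| + 1) with hδ
  have hδval : ∀ i, δ i = if g i = 0 then 1 else |g i| / (|t i| + 1) := fun i => rfl
  have hδpos : ∀ i, 0 < δ i := by
    intro i
    rw [hδval]
    split
    · norm_num
    · next h =>
      have h2 : 0 < |g i| := abs_pos.mpr h
      positivity
  have h7 : 0 < min (ε / (M + 1)) (Finset.univ.inf' hne' δ) := by
    apply lt_min
    · exact div_pos hε2 (by positivity)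
    · rw [Finset.lt_inf'_iff]
      intro j _
      exact hδpos j
  refine ⟨min (ε / (M + 1)) (Finset.univ.inf' hne' δ), h7, ?_, ?_⟩
  · intro i hgi
    have h2 : 0 < |g i| := abs_pos.mpr hgi
    have h6 : (0:ℝ) < |t i| + 1 := by positivity
    have h5 : min (ε / (M + 1)) (Finset.univ.inf' hne' δ) ≤ δ i :=
      (min_le_right _ _).trans (Finset.inf'_le _ (Finset.mem_univ i))
    rw [hδval, if_neg hgi, le_div_iff₀ h6] at h5
    nlinarith
  · have h6 : (0:ℝ) < M + 1 := by positivity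
    have h5 : min (ε / (M + 1)) (Finset.univ.inf' hne' δ) ≤ ε / (M + 1) :=
      min_le_left _ _
    rw [le_div_iff₀ h6] at h5
    nlinarith


/-- KKT / representer characterization of the minimizer of the (weighted) hinge-loss SVM
objective `J(w, b) = ½‖w‖² + ∑ i cᵢ max(0, 1 − yᵢ(⟨φᵢ, w⟩ + b))` over `H × ℝ`. -/
theorem svm_kkt_characterization
    (n : ℕ) (hn : 0 < n)
    (H : Type*) [NormedAddCommGroup H] [InnerProductSpace ℝ H] [FiniteDimensional ℝ H]
    (φ : Fin n → H) (y : Fin n → ℝ) (hy : ∀ i, y i = 1 ∨ y i = -1)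
    (c : Fin n → ℝ) (hc : ∀ i, 0 ≤ c i)
    (J : H → ℝ → ℝ)
    (hJ : ∀ w b, J w b = (1 / 2) * ‖w‖ ^ 2 + ∑ i, c i * max 0 (1 - y i * (⟪φ i, w⟫ + b)))
    (wh : H) (bh : ℝ) :
    (∀ w b, J wh bh ≤ J w b) ↔
      ∃ α : Fin n → ℝ,
        wh = ∑ i, (α i * y i) • φ i ∧
        ∑ i, α i * y i = 0 ∧
        ∀ i,
          (1 - y i * (⟪φ i, wh⟫ + bh) < 0 → α i = 0) ∧
          (0 < 1 - y i * (⟪φ i, wh⟫ + bh) → α i = c i) ∧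
          (1 - y i * (⟪φ i, wh⟫ + bh) = 0 → 0 ≤ α i ∧ α i ≤ c i) := by
  set g : Fin n → ℝ := fun i => 1 - y i * (⟪φ i, wh⟫ + bh) with hg
  have hfold : ∀ i, 1 - y i * (⟪φ i, wh⟫ + bh) = g i := fun i => rfl
  constructor
  · -- forward direction
    intro hmin
    set l : Fin n → ℝ := fun i => if 0 < g i then c i else 0 with hl
    set uu : Fin n → ℝ := fun i => if g i < 0 then 0 else c i with huu
    have hlval : ∀ i, l i = if 0 < g i then c i else 0 := fun i => rfl
    have huval : ∀ i, uu i = if g i < 0 then 0 else c i := fun i => rfl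
    have hlu : ∀ i, l i ≤ uu i := by
      intro i
      rw [hlval, huval]
      rcases lt_trichotomy (g i) 0 with h | h | h
      · rw [if_neg (not_lt.mpr h.le), if_pos h]
      · rw [if_neg (by rw [h]; exact lt_irrefl 0), if_neg (by rw [h]; exact lt_irrefl 0)]
        exact hc i
      · rw [if_pos h, if_neg (not_lt.mpr h.le)]
    -- linear maps
    set L1 : (Fin n → ℝ) →ₗ[ℝ] H :=
      { toFun := fun a => ∑ i, (a i * y i) • φ i
        map_add' := by
          intro a b
          simp [add_mul, add_smul, Finset.sum_add_distrib]
        map_smul' := by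
          intro r a
          simp [mul_assoc, ← smul_smul, ← Finset.smul_sum] } with hL1def
    set L2 : (Fin n → ℝ) →ₗ[ℝ] ℝ :=
      { toFun := fun a => ∑ i, a i * y i
        map_add' := by
          intro a b
          simp [add_mul, Finset.sum_add_distrib]
        map_smul' := by
          intro r a
          simp [Finset.mul_sum, mul_assoc] } with hL2def
    set L : (Fin n → ℝ) →ₗ[ℝ] WithLp 2 (H × ℝ) :=
      (WithLp.linearEquiv 2 ℝ (H × ℝ)).symm.toLinearMap.comp (L1.prod L2) with hLdef
    have hLfst : ∀ a, (L a).fst = ∑ i, (a i * y i) • φ i := fun a => rfl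
    have hLsnd : ∀ a, (L a).snd = ∑ i, a i * y i := fun a => rfl
    set B : Set (Fin n → ℝ) := Set.univ.pi fun i => Set.Icc (l i) (uu i) with hB
    set S : Set (WithLp 2 (H × ℝ)) := L '' B with hS
    set x : WithLp 2 (H × ℝ) := (WithLp.equiv 2 (H × ℝ)).symm (wh, 0) with hx
    have hxfst : x.fst = wh := rfl
    have hxsnd : x.snd = (0 : ℝ) := rfl
    suffices hxS : x ∈ S by
      obtain ⟨α, hαB, hαL⟩ := hxS
      have h1 : (∑ i, (α i * y i) • φ i) = wh := by
        rw [← hLfst α, hαL, hxfst]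
      have h2 : (∑ i, α i * y i) = 0 := by
        rw [← hLsnd α, hαL, hxsnd]
      refine ⟨α, h1.symm, h2, ?_⟩
      intro i
      have hmem : α i ∈ Set.Icc (l i) (uu i) := hαB i (Set.mem_univ i)
      refine ⟨?_, ?_, ?_⟩
      · intro hgi
        rw [hfold i] at hgi
        have h3 : uu i = 0 := by rw [huval, if_pos hgi]
        have h4 : l i = 0 := by rw [hlval, if_neg (not_lt.mpr hgi.le)]
        rw [h4, h3] at hmem
        linarith [hmem.1, hmem.2]
      · intro hgi
        rw [hfold i] at hgi
        have h3 : uu i = c i := by rw [huval, if_neg (not_lt.mpr hgi.le)]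
        have h4 : l i = c i := by rw [hlval, if_pos hgi]
        rw [h4, h3] at hmem
        linarith [hmem.1, hmem.2]
      · intro hgi
        rw [hfold i] at hgi
        have h3 : uu i = c i := by rw [huval, if_neg (by rw [hgi]; exact lt_irrefl 0)]
        have h4 : l i = 0 := by rw [hlval, if_neg (by rw [hgi]; exact lt_irrefl 0)]
        rw [h4, h3] at hmem
        exact hmem
    by_contra hxS
    -- separate x from S
    have hBcompact : IsCompact B := isCompact_univ_pi fun i => isCompact_Icc
    have hBconv : Convex ℝ B := convex_pi fun i _ => convex_Icc _ _
    have hScompact : IsCompact S := hBcompact.image L.continuous_of_finiteDimensional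
    have hSconv : Convex ℝ S := hBconv.linear_image L
    have hSne : S.Nonempty := ⟨L l, l, fun i _ => ⟨le_refl _, hlu i⟩, rfl⟩
    obtain ⟨v, hv2, hvsep⟩ := sep_lemma hScompact hSconv hSne hxS
    set u : H := v.fst with hu
    set β : ℝ := v.snd with hβ
    set t : Fin n → ℝ := fun i => y i * (⟪φ i, u⟫ + β) with ht
    have htval : ∀ i, t i = y i * (⟪φ i, u⟫ + β) := fun i => rfl
    set αs : Fin n → ℝ := fun i => if 0 < t i then uu i else l i with hαs
    have hαsval : ∀ i, αs i = if 0 < t i then uu i else l i := fun i => rfl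
    have hαsB : αs ∈ B := by
      intro i _
      rw [Set.mem_Icc, hαsval]
      split
      · exact ⟨hlu i, le_refl _⟩
      · exact ⟨le_refl _, hlu i⟩
    -- key inequality
    have hinner : ⟪v, x - L αs⟫ = ⟪u, wh⟫ - ∑ i, αs i * t i := by
      rw [inner_sub_right]
      have hxv : ⟪v, x⟫ = ⟪u, wh⟫ := by
        rw [hx, WithLp.prod_inner_apply, WithLp.equiv_symm_apply, WithLp.ofLp_toLp, WithLp.ofLp_fst,
          WithLp.ofLp_snd]
        have h0 : (⟪v.snd, ((wh, (0:ℝ)).snd : ℝ)⟫ : ℝ) = 0 := by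
          simp [RCLike.inner_apply]
        rw [h0, add_zero]
      have hLv : ⟪v, L αs⟫ = (∑ i, αs i * y i * ⟪φ i, u⟫) + β * ∑ i, αs i * y i := by
        rw [WithLp.prod_inner_apply, WithLp.ofLp_fst v, WithLp.ofLp_snd v, WithLp.ofLp_fst (L αs),
          WithLp.ofLp_snd (L αs), hLfst, hLsnd]
        congr 1
        · rw [inner_sum]
          apply Finset.sum_congr rfl
          intro i _
          rw [real_inner_smul_right, real_inner_comm]
        · simp only [RCLike.inner_apply, conj_trivial]
          exact mul_comm _ _
      rw [hxv, hLv]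
      have hts : ∑ i, αs i * t i = (∑ i, αs i * y i * ⟪φ i, u⟫) + β * ∑ i, αs i * y i := by
        rw [Finset.mul_sum, ← Finset.sum_add_distrib]
        apply Finset.sum_congr rfl
        intro i _
        rw [htval]
        ring
      rw [hts]
    have hkey0 : ∑ i, αs i * t i ≤ ⟪u, wh⟫ - ‖v‖ ^ 2 := by
      have := hvsep (L αs) ⟨αs, hαsB, rfl⟩
      rw [hinner] at this
      linarith
    obtain ⟨ε, hε2, hkey⟩ : ∃ ε : ℝ, 0 < ε ∧ ∑ i, αs i * t i ≤ ⟪u, wh⟫ - ε :=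
      ⟨‖v‖ ^ 2, hv2, hkey0⟩
    clear_value u β
    clear hu hβ hinner hkey0 hv2 hvsep v
    obtain ⟨s, hspos, hst, hsu⟩ := step_size hn g t ε (‖u‖ ^ 2) hε2 (by positivity)
    -- the new margins
    have hmarg : ∀ i, 1 - y i * (⟪φ i, wh - s • u⟫ + (bh - s * β)) = g i + s * t i := by
      intro i
      rw [← hfold i, htval i, inner_sub_right, real_inner_smul_right]
      ring
    -- per-term equality
    have hterm : ∀ i, c i * max 0 (g i + s * t i) = c i * max 0 (g i) + s * (αs i * t i) := by
      intro i
      have habs1 : s * t i ≤ s * |t i| := mul_le_mul_of_nonneg_left (le_abs_self _) hspos.le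
      have habs2 : -(s * |t i|) ≤ s * t i := by
        have := mul_le_mul_of_nonneg_left (neg_abs_le (t i)) hspos.le
        linarith
      rcases lt_trichotomy (g i) 0 with hgi | hgi | hgi
      · have h1 : s * |t i| < |g i| := hst i (ne_of_lt hgi)
        rw [abs_of_neg hgi] at h1
        have h3 : g i + s * t i < 0 := by linarith
        have hα0 : αs i = 0 := by
          rw [hαsval, hlval, huval]
          split <;> simp [hgi, not_lt.mpr hgi.le]
        rw [max_eq_left h3.le, max_eq_left hgi.le, hα0]
        ring
      · have hα : αs i * t i = c i * max 0 (t i) := by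
          rw [hαsval, hlval, huval]
          rcases lt_or_ge 0 (t i) with hti | hti
          · rw [if_pos hti, if_neg (by rw [hgi]; exact lt_irrefl 0), max_eq_right hti.le]
          · rw [if_neg (not_lt.mpr hti), if_neg (by rw [hgi]; exact lt_irrefl 0),
              max_eq_left hti]
            ring
        rw [hgi, zero_add]
        rcases lt_or_ge 0 (t i) with hti | hti
        · rw [max_eq_right (mul_nonneg hspos.le hti.le),
            max_eq_left (le_refl (0:ℝ)), hα, max_eq_right hti.le]
          ring
        · have h5 : s * t i ≤ 0 := mul_nonpos_of_nonneg_of_nonpos hspos.le hti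
          rw [max_eq_left h5, max_eq_left (le_refl (0:ℝ)), hα, max_eq_left hti]
          ring
      · have h1 : s * |t i| < |g i| := hst i (ne_of_gt hgi)
        rw [abs_of_pos hgi] at h1
        have h3 : 0 < g i + s * t i := by linarith
        have hαc : αs i = c i := by
          rw [hαsval, hlval, huval]
          split <;> simp [hgi, not_lt.mpr hgi.le]
        rw [max_eq_right h3.le, max_eq_right hgi.le, hαc]
        ring
    -- contradiction with minimality
    have hmm := hmin (wh - s • u) (bh - s * β)
    rw [hJ, hJ] at hmm
    simp only [hfold, hmarg] at hmm
    clear hmin hxS hScompact hSconv hSne hBcompact hBconv hαsB hJ hy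
    clear hLfst hLsnd hL1def hL2def hLdef hxfst hxsnd hx hB hS
    clear S B x
    clear L
    clear L1 L2
    clear_value g l uu t αs
    have hnorm : ‖wh - s • u‖ ^ 2 = ‖wh‖ ^ 2 - 2 * (s * ⟪wh, u⟫) + s ^ 2 * ‖u‖ ^ 2 := by
      rw [norm_sub_sq_real, real_inner_smul_right, norm_smul]
      rw [mul_pow, Real.norm_eq_abs, sq_abs]
    have hsum2 : ∑ i, c i * max 0 (g i + s * t i)
        = (∑ i, c i * max 0 (g i)) + s * ∑ i, αs i * t i := by
      rw [Finset.mul_sum, ← Finset.sum_add_distrib]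
      apply Finset.sum_congr rfl
      intro i _
      rw [hterm i]
    rw [hsum2, hnorm] at hmm
    have hcomm : ⟪wh, u⟫ = ⟪u, wh⟫ := real_inner_comm _ _
    rw [hcomm] at hmm
    have hs4 : s ^ 2 * ‖u‖ ^ 2 < s * ε := by
      have h8 := mul_lt_mul_of_pos_left hsu hspos
      linarith only [h8]
    have hs5 : s * ∑ i, αs i * t i ≤ s * (⟪u, wh⟫ - ε) :=
      mul_le_mul_of_nonneg_left hkey hspos.le
    have h9 : 0 ≤ s ^ 2 * ‖u‖ ^ 2 := by positivity
    linarith only [hmm, hs4, hs5, h9]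
  · -- backward direction
    rintro ⟨α, hw, hsum0, hcond⟩ w b
    rw [hJ, hJ]
    set G : Fin n → ℝ := fun i => 1 - y i * (⟪φ i, w⟫ + b) with hG
    have hGfold : ∀ i, 1 - y i * (⟪φ i, w⟫ + b) = G i := fun i => rfl
    simp only [hfold, hGfold]
    have hc1 : ∀ i, (g i < 0 → α i = 0) ∧ (0 < g i → α i = c i) ∧
        (g i = 0 → 0 ≤ α i ∧ α i ≤ c i) := by
      intro i
      refine ⟨fun h => (hcond i).1 ?_, fun h => (hcond i).2.1 ?_, fun h => (hcond i).2.2 ?_⟩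
      · rw [hfold i]; exact h
      · rw [hfold i]; exact h
      · rw [hfold i]; exact h
    have hbounds : ∀ i, 0 ≤ α i ∧ α i ≤ c i := by
      intro i
      rcases lt_trichotomy (g i) 0 with h | h | h
      · rw [(hc1 i).1 h]; exact ⟨le_refl 0, hc i⟩
      · exact (hc1 i).2.2 h
      · rw [(hc1 i).2.1 h]; exact ⟨hc i, le_refl _⟩
    have hkey : ∀ i, c i * max 0 (g i) + α i * (G i - g i) ≤ c i * max 0 (G i) := by
      intro i
      obtain ⟨ha0, hac⟩ := hbounds i
      rcases lt_trichotomy (g i) 0 with h | h | h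
      · rw [(hc1 i).1 h, max_eq_left h.le]
        have : 0 ≤ c i * max 0 (G i) := mul_nonneg (hc i) (le_max_left _ _)
        linarith
      · rw [h, max_eq_left (le_refl (0:ℝ))]
        rcases le_or_gt 0 (G i) with hGi | hGi
        · rw [max_eq_right hGi]
          have := mul_le_mul_of_nonneg_right hac hGi
          nlinarith
        · rw [max_eq_left hGi.le]
          nlinarith
      · rw [(hc1 i).2.1 h, max_eq_right h.le]
        have h1 : G i ≤ max 0 (G i) := le_max_right _ _
        nlinarith [mul_le_mul_of_nonneg_left h1 (hc i)]
    have hsumkey : (∑ i, c i * max 0 (g i)) + ∑ i, α i * (G i - g i)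
        ≤ ∑ i, c i * max 0 (G i) := by
      rw [← Finset.sum_add_distrib]
      exact Finset.sum_le_sum fun i _ => hkey i
    have hlin : ∑ i, α i * (G i - g i) = -⟪wh, w - wh⟫ := by
      have h1 : ⟪wh, w - wh⟫ = ∑ i, α i * y i * ⟪φ i, w - wh⟫ := by
        nth_rewrite 1 [hw]
        rw [sum_inner]
        apply Finset.sum_congr rfl
        intro i _
        rw [real_inner_smul_left]
      have h2 : ∀ i, α i * (G i - g i)
          = -(α i * y i * ⟪φ i, w - wh⟫) - (α i * y i) * (b - bh) := by
        intro i
        rw [← hGfold i, ← hfold i, inner_sub_right]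
        ring
      calc ∑ i, α i * (G i - g i)
          = ∑ i, (-(α i * y i * ⟪φ i, w - wh⟫) - (α i * y i) * (b - bh)) :=
            Finset.sum_congr rfl fun i _ => h2 i
        _ = (∑ i, -(α i * y i * ⟪φ i, w - wh⟫)) - ∑ i, (α i * y i) * (b - bh) := by
            rw [Finset.sum_sub_distrib]
        _ = -(∑ i, α i * y i * ⟪φ i, w - wh⟫) - (∑ i, α i * y i) * (b - bh) := by
            rw [Finset.sum_neg_distrib, Finset.sum_mul]
        _ = -⟪wh, w - wh⟫ := by rw [hsum0, h1]; ring
    have hnorm : ‖w‖ ^ 2 = ‖wh‖ ^ 2 + 2 * ⟪wh, w - wh⟫ + ‖w - wh‖ ^ 2 := by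
      have he : w = wh + (w - wh) := by abel
      conv_lhs => rw [he]
      rw [norm_add_sq_real]
    have hn2 : 0 ≤ ‖w - wh‖ ^ 2 := sq_nonneg _
    nlinarith [hsumkey, hlin, hnorm, hn2]
end

section
/- Let n, d be positive integers, X ∈ ℝ^{n×d} with rows X_1, …, X_n, y ∈ ℝⁿ, α > 0, let I ⊆ (0, ∞) be an open interval, let A ⊆ {1, …, d} and E ⊆ {1, …, n} be fixed index sets, and let s_j ∈ {−1, 1} for j ∈ A be fixed signs. Let w : I → ℝᵈ be differentiable and for λ ∈ I write r_i(λ) = ⟨X_i, w(λ)⟩ − y_i and ℓ_i(λ) = (1/(2n)) r_i(λ)². Assume that for every λ ∈ I: (a) w_j(λ) = 0 for all j ∉ A; (b) the stationarity identity (1/n) Σ_{i∈E} (1 − ℓ_i(λ)/λ) r_i(λ) X_{ij} + α s_j = 0 holds for every j ∈ A; and (c) the |A|×|A| matrix M(λ) = X_{AE}ᵀ Diag(1 − 3ℓ_i(λ)/λ)_{i∈E} X_{EA} is invertible, where X_{EA} is the submatrix of X with rows in E and columns in A. Then the active components satisfy the ordinary differential equation d w_A/dλ = − (1/λ²) M(λ)⁻¹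 X_{AE}ᵀ (ℓ_E(λ) ⊙ r_E(λ)), where ⊙ denotes the entrywise product; in particular, when r_i(λ) ≥ 0 for all i ∈ E this equals − (√(2n)/λ²) M(λ)⁻¹ X_{AE}ᵀ ℓ_E(λ)^{3/2} with the power taken entrywise. -/
open Set

/-- Age-path ODE for the self-paced Lasso with the linear self-paced regularizer:
along a segment of the age-path where the active set `A`, the sign pattern `s`, and the
easy-sample set `E` are constant, and where the stationarity identity holds with the
matrix `M(λ) = X_{AE}ᵀ Diag(1 − 3ℓᵢ(λ)/λ) X_{EA}` invertible, the active components of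
the solution satisfy `d w_A/dλ = −(1/λ²) M(λ)⁻¹ X_{AE}ᵀ (ℓ_E ⊙ r_E)`; when the residuals
on `E` are nonnegative this equals `−(√(2n)/λ²) M(λ)⁻¹ X_{AE}ᵀ ℓ_E^{3/2}`. -/
theorem lasso_age_path_ode
    (n d : ℕ) (hn : 0 < n) (hd : 0 < d)
    (X : Matrix (Fin n) (Fin d) ℝ) (y : Fin n → ℝ)
    (α : ℝ) (hα : 0 < α)
    (a b : ℝ) (ha : 0 ≤ a)
    (A : Finset (Fin d)) (E : Finset (Fin n))
    (s : Fin d → ℝ) (hs : ∀ j ∈ A, s j = 1 ∨ s j = -1)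
    (w w' : ℝ → Fin d → ℝ)
    (hw : ∀ lam ∈ Ioo a b, ∀ j, HasDerivAt (fun t => w t j) (w' lam j) lam)
    (r : Fin n → ℝ → ℝ)
    (hr : ∀ i lam, r i lam = (∑ j, X i j * w lam j) - y i)
    (ℓ : Fin n → ℝ → ℝ)
    (hℓ : ∀ i lam, ℓ i lam = (1 / (2 * (n : ℝ))) * (r i lam) ^ 2)
    (hinactive : ∀ lam ∈ Ioo a b, ∀ j ∉ A, w lam j = 0)
    (hstat : ∀ lam ∈ Ioo a b, ∀ j ∈ A,
      (1 / (n : ℝ)) * ∑ i ∈ E, (1 - ℓ i lam / lam) * r i lam * X i j + α * s j = 0)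
    (M : ℝ → Matrix A A ℝ)
    (hM : ∀ (lam : ℝ) (j k : A),
      M lam j k = ∑ i ∈ E, X i j.1 * (1 - 3 * ℓ i lam / lam) * X i k.1)
    (hMinv : ∀ lam ∈ Ioo a b, IsUnit (M lam)) :
    ∀ lam ∈ Ioo a b, ∀ j : A,
      w' lam j.1 =
        -(1 / lam ^ 2) * ∑ k : A, (M lam)⁻¹ j k * ∑ i ∈ E, X i k.1 * (ℓ i lam * r i lam) ∧
      ((∀ i ∈ E, 0 ≤ r i lam) →
        w' lam j.1 =
          -(Real.sqrt (2 * n) / lam ^ 2) *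
            ∑ k : A, (M lam)⁻¹ j k * ∑ i ∈ E, X i k.1 * (ℓ i lam ^ ((3 : ℝ) / 2))) := by
  intro lam hlam j
  have hlam0 : 0 < lam := lt_of_le_of_lt ha hlam.1
  have hn' : (n : ℝ) ≠ 0 := Nat.cast_ne_zero.mpr hn.ne'
  -- derivatives of inactive coordinates vanish
  have hw'0 : ∀ p, p ∉ A → w' lam p = 0 := by
    intro p hp
    have h2 : HasDerivAt (fun t => w t p) 0 lam := by
      have hev : (fun t => w t p) =ᶠ[nhds lam] (fun _ => (0 : ℝ)) := by
        filter_upwards [Ioo_mem_nhds hlam.1 hlam.2] with t ht using hinactive t ht p hp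
      exact (hasDerivAt_const lam (0 : ℝ)).congr_of_eventuallyEq hev
    exact (hw lam hlam p).unique h2
  set R : Fin n → ℝ := fun i => ∑ k ∈ A, X i k * w' lam k with hRdef
  -- derivative of the residuals
  have hr' : ∀ i, HasDerivAt (r i) (R i) lam := by
    intro i
    have h1 : HasDerivAt (fun t => (∑ p, X i p * w t p) - y i) (∑ p, X i p * w' lam p) lam :=
      (HasDerivAt.fun_sum fun p _ => (hw lam hlam p).const_mul (X i p)).sub_const (y i)
    have heq : (fun t => (∑ p, X i p * w t p) - y i) = r i := funext fun t => (hr i t).symm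
    rw [heq] at h1
    convert h1 using 1
    exact (Finset.sum_subset (Finset.subset_univ A)
      (fun p _ hp => by rw [hw'0 p hp, mul_zero]))
  -- derivative of the losses
  have hl' : ∀ i, HasDerivAt (ℓ i) (r i lam * R i / n) lam := by
    intro i
    have h1 : HasDerivAt (fun t => (1 / (2 * (n : ℝ))) * (r i t) ^ 2)
        ((1 / (2 * (n : ℝ))) * ((2 : ℕ) * r i lam ^ 1 * R i)) lam :=
      ((hr' i).pow 2).const_mul _
    have heq : (fun t => (1 / (2 * (n : ℝ))) * (r i t) ^ 2) = ℓ i :=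
      funext fun t => (hℓ i t).symm
    rw [heq] at h1
    convert h1 using 1
    push_cast
    field_simp
  -- differentiating the stationarity identity
  have hD : ∀ jj ∈ A, ∑ i ∈ E,
      (ℓ i lam * r i lam / lam ^ 2 + (1 - 3 * ℓ i lam / lam) * R i) * X i jj = 0 := by
    intro jj hjj
    have hterm : ∀ i ∈ E, HasDerivAt (fun t => (1 - ℓ i t / t) * r i t * X i jj)
        ((ℓ i lam * r i lam / lam ^ 2 + (1 - 3 * ℓ i lam / lam) * R i) * X i jj) lam := by
      intro i _
      have hdiv : HasDerivAt (fun t => ℓ i t / t)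
          (((r i lam * R i / n) * lam - ℓ i lam * 1) / lam ^ 2) lam :=
        (hl' i).div (hasDerivAt_id lam) hlam0.ne'
      have h2 : HasDerivAt (fun t => 1 - ℓ i t / t)
          (-(((r i lam * R i / n) * lam - ℓ i lam * 1) / lam ^ 2)) lam := hdiv.const_sub 1
      have h3 := (h2.mul (hr' i)).mul_const (X i jj)
      refine h3.congr_deriv ?_
      have hli : ℓ i lam = (1 / (2 * (n : ℝ))) * r i lam ^ 2 := hℓ i lam
      rw [hli]
      field_simp
      ring
    have hg : HasDerivAt
        (fun t => (1 / (n : ℝ)) * ∑ i ∈ E, (1 - ℓ i t / t) * r i t * X i jj + α * s jj)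
        ((1 / (n : ℝ)) *
          ∑ i ∈ E, (ℓ i lam * r i lam / lam ^ 2 + (1 - 3 * ℓ i lam / lam) * R i) * X i jj)
        lam :=
      ((HasDerivAt.fun_sum hterm).const_mul _).add_const _
    have hzero : HasDerivAt
        (fun t => (1 / (n : ℝ)) * ∑ i ∈ E, (1 - ℓ i t / t) * r i t * X i jj + α * s jj)
        0 lam := by
      have hev : (fun t => (1 / (n : ℝ)) * ∑ i ∈ E, (1 - ℓ i t / t) * r i t * X i jj + α * s jj)
          =ᶠ[nhds lam] (fun _ => (0 : ℝ)) := by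
        filter_upwards [Ioo_mem_nhds hlam.1 hlam.2] with t ht using hstat t ht jj hjj
      exact (hasDerivAt_const lam (0 : ℝ)).congr_of_eventuallyEq hev
    have huniq := hg.unique hzero
    have h1n : (1 / (n : ℝ)) ≠ 0 := one_div_ne_zero hn'
    exact (mul_eq_zero.mp huniq).resolve_left h1n
  -- the matrix equation
  set uA : A → ℝ := fun k => w' lam k.1 with huAdef
  set c : A → ℝ := fun k => -(1 / lam ^ 2) * ∑ i ∈ E, X i k.1 * (ℓ i lam * r i lam) with hcdef
  have hMv : (M lam).mulVec uA = c := by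
    funext k
    have h0 := hD k.1 k.2
    have hswap : ∑ p : A, M lam k p * uA p
        = ∑ i ∈ E, X i k.1 * (1 - 3 * ℓ i lam / lam) * R i := by
      calc ∑ p : A, M lam k p * uA p
          = ∑ p : A, ∑ i ∈ E, X i k.1 * (1 - 3 * ℓ i lam / lam) * (X i p.1 * w' lam p.1) := by
            refine Finset.sum_congr rfl fun p _ => ?_
            rw [hM, Finset.sum_mul]
            exact Finset.sum_congr rfl fun i _ => by simp [huAdef]; ring
        _ = ∑ i ∈ E, ∑ p : A, X i k.1 * (1 - 3 * ℓ i lam / lam) * (X i p.1 * w' lam p.1) :=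
            Finset.sum_comm
        _ = ∑ i ∈ E, X i k.1 * (1 - 3 * ℓ i lam / lam) * R i := by
            refine Finset.sum_congr rfl fun i _ => ?_
            rw [← Finset.mul_sum, hRdef]
            congr 1
            exact Finset.sum_coe_sort A (fun p => X i p * w' lam p)
    have hsum : ∑ i ∈ E, X i k.1 * (1 - 3 * ℓ i lam / lam) * R i
        + (1 / lam ^ 2) * ∑ i ∈ E, X i k.1 * (ℓ i lam * r i lam) = 0 := by
      rw [Finset.mul_sum, ← Finset.sum_add_distrib, ← h0]
      refine Finset.sum_congr rfl fun i _ => ?_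
      ring
    have : ((M lam).mulVec uA) k = ∑ p : A, M lam k p * uA p := by
      simp [Matrix.mulVec, dotProduct]
    rw [this, hswap, hcdef]
    linarith [hsum]
  have hdet : IsUnit (M lam).det := (Matrix.isUnit_iff_isUnit_det _).mp (hMinv lam hlam)
  have hu : uA = (M lam)⁻¹.mulVec c := by
    rw [← hMv, Matrix.mulVec_mulVec, Matrix.nonsing_inv_mul _ hdet, Matrix.one_mulVec]
  have hfirst : w' lam j.1
      = -(1 / lam ^ 2) * ∑ k : A, (M lam)⁻¹ j k * ∑ i ∈ E, X i k.1 * (ℓ i lam * r i lam) := by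
    have hj := congrFun hu j
    have : uA j = ∑ k : A, (M lam)⁻¹ j k * c k := by
      rw [hj]; simp [Matrix.mulVec, dotProduct]
    have huj : w' lam j.1 = ∑ k : A, (M lam)⁻¹ j k * c k := this
    rw [huj, Finset.mul_sum]
    refine Finset.sum_congr rfl fun k _ => ?_
    rw [hcdef]
    ring
  refine ⟨hfirst, fun hrpos => ?_⟩
  rw [hfirst]
  have hterm : ∀ i ∈ E, Real.sqrt (2 * n) * ℓ i lam ^ ((3 : ℝ) / 2) = ℓ i lam * r i lam := by
    intro i hi
    have ht : 0 ≤ r i lam := hrpos i hi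
    have h2n : (0 : ℝ) < 2 * n := by positivity
    set s2 := Real.sqrt (2 * (n : ℝ)) with hs2
    have hs2pos : 0 < s2 := Real.sqrt_pos.mpr h2n
    have hs2sq : s2 ^ 2 = 2 * n := Real.sq_sqrt h2n.le
    have hx : 0 ≤ r i lam / s2 := div_nonneg ht hs2pos.le
    have hleq : ℓ i lam = (r i lam / s2) ^ 2 := by
      rw [hℓ, div_pow, hs2sq]; ring
    rw [hleq]
    have hpow : ((r i lam / s2) ^ 2 : ℝ) ^ ((3 : ℝ) / 2) = (r i lam / s2) ^ 3 := by
      rw [← Real.rpow_natCast (r i lam / s2) 2, ← Real.rpow_mul hx]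
      norm_num
    rw [hpow]
    have hs2ne : s2 ≠ 0 := hs2pos.ne'
    field_simp
  have hperk : ∀ k : A, ∑ i ∈ E, X i k.1 * (ℓ i lam * r i lam)
      = Real.sqrt (2 * n) * ∑ i ∈ E, X i k.1 * (ℓ i lam ^ ((3 : ℝ) / 2)) := by
    intro k
    rw [Finset.mul_sum]
    refine Finset.sum_congr rfl fun i hi => ?_
    rw [← hterm i hi]
    ring
  rw [Finset.mul_sum, Finset.mul_sum]
  refine Finset.sum_congr rfl fun k _ => ?_
  rw [hperk k]
  ring
end

section
/- Let λ > 0, γ > 0, and ℓ > 0. The function v ↦ v·ℓ + γ²/(v + γ/λ) on the interval [0,1] attains its minimum at v* given by: v* = 1 if ℓ ≤ (λγ/(λ+γ))²; v* = γ/√ℓ − γ/λ if (λγ/(λ+γ))² ≤ ℓ ≤ λ²; and v* = 0 if ℓ ≥ λ². -/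
open Set

lemma diff_formula (ℓ γ t s : ℝ) (ht : t ≠ 0) (hs : s ≠ 0) :
    (t * ℓ + γ ^ 2 / t) - (s * ℓ + γ ^ 2 / s) = (t - s) * (t * s * ℓ - γ ^ 2) / (t * s) := by
  field_simp
  ring

/-- Closed-form optimal weight for the mixture self-paced regularizer: for `λ, γ > 0`
and `ℓ > 0`, the function `v ↦ v·ℓ + γ²/(v + γ/λ)` on `[0,1]` attains its minimum at
`v* = 1` if `ℓ ≤ (λγ/(λ+γ))²`, at `v* = γ/√ℓ − γ/λ` if `(λγ/(λ+γ))² ≤ ℓ ≤ λ²`, and at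
`v* = 0` if `ℓ ≥ λ²`. -/
theorem mixture_sp_regularizer_optimal_weight
    (lam γ ℓ : ℝ) (hlam : 0 < lam) (hγ : 0 < γ) (hℓ : 0 < ℓ) :
    (ℓ ≤ (lam * γ / (lam + γ)) ^ 2 →
      (1 : ℝ) ∈ Icc (0 : ℝ) 1 ∧
      ∀ v ∈ Icc (0 : ℝ) 1,
        1 * ℓ + γ ^ 2 / (1 + γ / lam) ≤ v * ℓ + γ ^ 2 / (v + γ / lam)) ∧
    ((lam * γ / (lam + γ)) ^ 2 ≤ ℓ → ℓ ≤ lam ^ 2 →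
      γ / Real.sqrt ℓ - γ / lam ∈ Icc (0 : ℝ) 1 ∧
      ∀ v ∈ Icc (0 : ℝ) 1,
        (γ / Real.sqrt ℓ - γ / lam) * ℓ + γ ^ 2 / ((γ / Real.sqrt ℓ - γ / lam) + γ / lam) ≤
          v * ℓ + γ ^ 2 / (v + γ / lam)) ∧
    (lam ^ 2 ≤ ℓ →
      (0 : ℝ) ∈ Icc (0 : ℝ) 1 ∧
      ∀ v ∈ Icc (0 : ℝ) 1,
        0 * ℓ + γ ^ 2 / (0 + γ / lam) ≤ v * ℓ + γ ^ 2 / (v + γ / lam)) := by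
  have hlg : 0 < lam + γ := by linarith
  have hgl : 0 < γ / lam := div_pos hγ hlam
  refine ⟨?_, ?_, ?_⟩
  · -- easy set: v* = 1
    intro hle
    refine ⟨⟨zero_le_one, le_refl 1⟩, ?_⟩
    intro v ⟨hv0, hv1⟩
    have ht : (0:ℝ) < v + γ / lam := by linarith
    have hs : (0:ℝ) < 1 + γ / lam := by linarith
    -- rewrite with t = v + γ/lam, s = 1 + γ/lam
    have h1 : v * ℓ + γ ^ 2 / (v + γ / lam)
        = (v + γ / lam) * ℓ + γ ^ 2 / (v + γ / lam) - (γ / lam) * ℓ := by ring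
    have h2 : 1 * ℓ + γ ^ 2 / (1 + γ / lam)
        = (1 + γ / lam) * ℓ + γ ^ 2 / (1 + γ / lam) - (γ / lam) * ℓ := by ring
    rw [h1, h2]
    have key := diff_formula ℓ γ (v + γ / lam) (1 + γ / lam) ht.ne' hs.ne'
    have hsg : (1 + γ / lam) * (lam * γ / (lam + γ)) = γ := by
      field_simp
    have hsl : (1 + γ / lam) ^ 2 * ℓ ≤ γ ^ 2 := by
      calc (1 + γ / lam) ^ 2 * ℓ ≤ (1 + γ / lam) ^ 2 * (lam * γ / (lam + γ)) ^ 2 := by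
            apply mul_le_mul_of_nonneg_left hle (by positivity)
        _ = ((1 + γ / lam) * (lam * γ / (lam + γ))) ^ 2 := by ring
        _ = γ ^ 2 := by rw [hsg]
    have hts : v + γ / lam ≤ 1 + γ / lam := by linarith
    have hprod : (v + γ / lam) * (1 + γ / lam) * ℓ ≤ γ ^ 2 := by
      nlinarith [mul_le_mul_of_nonneg_right hts hs.le, hℓ.le, hsl, ht.le]
    have hnum : 0 ≤ ((v + γ / lam) - (1 + γ / lam)) * ((v + γ / lam) * (1 + γ / lam) * ℓ - γ ^ 2) := by
      nlinarith [mul_nonneg (sub_nonneg.mpr hts) (sub_nonneg.mpr hprod)]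
    have : 0 ≤ ((v + γ / lam) - (1 + γ / lam)) * ((v + γ / lam) * (1 + γ / lam) * ℓ - γ ^ 2) / ((v + γ / lam) * (1 + γ / lam)) :=
      div_nonneg hnum (by positivity)
    linarith [key ▸ this]
  · -- mixture set
    intro h1 h2
    set r := Real.sqrt ℓ with hr
    have hr0 : 0 < r := Real.sqrt_pos.mpr hℓ
    have hr2 : r ^ 2 = ℓ := Real.sq_sqrt hℓ.le
    have hrle : r ≤ lam := by
      nlinarith [hr2, hr0]
    have hrge : lam * γ / (lam + γ) ≤ r := by
      nlinarith [hr2, hr0, div_pos (mul_pos hlam hγ) hlg]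
    have hv0 : 0 ≤ γ / r - γ / lam := by
      rw [sub_nonneg]
      apply div_le_div_of_nonneg_left hγ.le hr0 hrle  -- maybe wrong name
    have hv1 : γ / r - γ / lam ≤ 1 := by
      have : γ / r ≤ 1 + γ / lam := by
        rw [div_le_iff₀ hr0]
        have := mul_le_mul_of_nonneg_left hrge (by positivity : (0:ℝ) ≤ (1 + γ/lam))
        have hsg : (1 + γ / lam) * (lam * γ / (lam + γ)) = γ := by field_simp
        linarith [hsg ▸ this]
      linarith
    refine ⟨⟨hv0, hv1⟩, ?_⟩
    intro v ⟨hva, hvb⟩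
    have ht : (0:ℝ) < v + γ / lam := by linarith
    have hsval : (γ / r - γ / lam) + γ / lam = γ / r := by ring
    have hs : (0:ℝ) < γ / r := div_pos hγ hr0
    rw [hsval, ← hr2]
    have hA : (γ / r - γ / lam) * r ^ 2 + γ ^ 2 / (γ / r)
        = (γ / r) * r ^ 2 + γ ^ 2 / (γ / r) - (γ / lam) * r ^ 2 := by ring
    have hB : v * r ^ 2 + γ ^ 2 / (v + γ / lam)
        = (v + γ / lam) * r ^ 2 + γ ^ 2 / (v + γ / lam) - (γ / lam) * r ^ 2 := by ring
    rw [hA, hB]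
    have key := diff_formula (r ^ 2) γ (v + γ / lam) (γ / r) ht.ne' hs.ne'
    have hfac : (v + γ / lam) * (γ / r) * r ^ 2 - γ ^ 2 = γ * r * ((v + γ / lam) - γ / r) := by
      field_simp
    have hnum : 0 ≤ ((v + γ / lam) - γ / r) * ((v + γ / lam) * (γ / r) * r ^ 2 - γ ^ 2) := by
      rw [hfac]
      have : ((v + γ / lam) - γ / r) * (γ * r * ((v + γ / lam) - γ / r))
          = γ * r * ((v + γ / lam) - γ / r) ^ 2 := by ring
      rw [this]
      positivity
    have : 0 ≤ ((v + γ / lam) - γ / r) * ((v + γ / lam) * (γ / r) * r ^ 2 - γ ^ 2) / ((v + γ / lam) * (γ / r)) :=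
      div_nonneg hnum (by positivity)
    linarith [key ▸ this]
  · -- discard set: v* = 0
    intro hge
    refine ⟨⟨le_refl 0, zero_le_one⟩, ?_⟩
    intro v ⟨hva, hvb⟩
    have ht : (0:ℝ) < v + γ / lam := by linarith
    have hs : (0:ℝ) < γ / lam := hgl
    have hA : 0 * ℓ + γ ^ 2 / (0 + γ / lam)
        = (γ / lam) * ℓ + γ ^ 2 / (γ / lam) - (γ / lam) * ℓ := by ring_nf
    have hB : v * ℓ + γ ^ 2 / (v + γ / lam)
        = (v + γ / lam) * ℓ + γ ^ 2 / (v + γ / lam) - (γ / lam) * ℓ := by ring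
    rw [hA, hB]
    have key := diff_formula ℓ γ (v + γ / lam) (γ / lam) ht.ne' hs.ne'
    have hnum : 0 ≤ ((v + γ / lam) - γ / lam) * ((v + γ / lam) * (γ / lam) * ℓ - γ ^ 2) := by
      apply mul_nonneg (by linarith)
      have h1 : (γ / lam) * (γ / lam) * lam ^ 2 = γ ^ 2 := by field_simp
      nlinarith [mul_le_mul_of_nonneg_right (mul_le_mul_of_nonneg_left (by linarith : γ / lam ≤ v + γ / lam) hs.le) hℓ.le,
        mul_le_mul_of_nonneg_left hge (by positivity : (0:ℝ) ≤ (γ/lam)*(γ/lam))]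
    have : 0 ≤ ((v + γ / lam) - γ / lam) * ((v + γ / lam) * (γ / lam) * ℓ - γ ^ 2) / ((v + γ / lam) * (γ / lam)) :=
      div_nonneg hnum (by positivity)
    linarith [key ▸ this]
end

section
/- Let λ > 0 and γ > 0. Then: (i) the mixture self-paced regularizer v ↦ f^M(v, λ, γ) = γ²/(v + γ/λ) is convex on [0,1]; (ii) its optimal-weight map v*(ℓ, λ) (equal to 1 if ℓ ≤ (λγ/(λ+γ))², to γ/√ℓ − γ/λ if (λγ/(λ+γ))² ≤ ℓ ≤ λ², and to 0 if ℓ ≥ λ²) is monotonically nonincreasing in ℓ for fixed λ, with v*(ℓ, λ) → 1 as ℓ → 0⁺ and v*(ℓ, λ) → 0 as ℓ → ∞; and (iii) for every fixed ℓ > 0, v*(ℓ, λ) is monotonically nondecreasing in λ, with v*(ℓ, λ) → 0 as λ → 0⁺ and lim_{λ→∞} v*(ℓ, λ) ≤ 1. -/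
open Set Filter Topology

private lemma mix_c_pos {γ lam : ℝ} (hγ : 0 < γ) (hlam : 0 < lam) :
    0 < lam * γ / (lam + γ) := by positivity

private lemma mix_c_le_gamma {γ lam : ℝ} (hγ : 0 < γ) (hlam : 0 < lam) :
    lam * γ / (lam + γ) ≤ γ := by
  rw [div_le_iff₀ (by positivity)]
  nlinarith

private lemma mix_g_le_one {γ lam ℓ : ℝ} (hγ : 0 < γ) (hlam : 0 < lam)
    (h : (lam * γ / (lam + γ)) ^ 2 ≤ ℓ) :
    γ / Real.sqrt ℓ - γ / lam ≤ 1 := by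
  have hc : 0 < lam * γ / (lam + γ) := mix_c_pos hγ hlam
  have hs : lam * γ / (lam + γ) ≤ Real.sqrt ℓ := by
    have := Real.sqrt_le_sqrt h
    rwa [Real.sqrt_sq hc.le] at this
  have h1 : γ / Real.sqrt ℓ ≤ γ / (lam * γ / (lam + γ)) := by gcongr
  have h2 : γ / (lam * γ / (lam + γ)) = 1 + γ / lam := by
    field_simp
  linarith

private lemma mix_g_nonneg {γ lam ℓ : ℝ} (hγ : 0 < γ) (hlam : 0 < lam)
    (hℓ : 0 < ℓ) (h : ℓ ≤ lam ^ 2) : 0 ≤ γ / Real.sqrt ℓ - γ / lam := by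
  have hs : Real.sqrt ℓ ≤ lam := by
    have := Real.sqrt_le_sqrt h
    rwa [Real.sqrt_sq hlam.le] at this
  have hsp : 0 < Real.sqrt ℓ := Real.sqrt_pos.mpr hℓ
  have : γ / lam ≤ γ / Real.sqrt ℓ := by gcongr
  linarith

/-- Mixture self-paced regularizer axioms: for `λ, γ > 0`, (i) `v ↦ γ²/(v + γ/λ)` is
convex on `[0,1]`; (ii) its optimal-weight map (piecewise `1`, `γ/√ℓ − γ/λ`, `0`) is
nonincreasing in the loss `ℓ`, tending to `1` as `ℓ → 0⁺` and to `0` as `ℓ → ∞`; and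
(iii) for fixed `ℓ > 0` it is nondecreasing in `λ`, tending to `0` as `λ → 0⁺`, with
limit at `λ → ∞` at most `1`. -/
theorem mixture_sp_regularizer_axioms
    (γ : ℝ) (hγ : 0 < γ)
    (vstar : ℝ → ℝ → ℝ)
    (hv : ∀ (ℓ lam : ℝ), 0 < lam →
      (ℓ ≤ (lam * γ / (lam + γ)) ^ 2 → vstar ℓ lam = 1) ∧
      ((lam * γ / (lam + γ)) ^ 2 ≤ ℓ → ℓ ≤ lam ^ 2 →
        vstar ℓ lam = γ / Real.sqrt ℓ - γ / lam) ∧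
      (lam ^ 2 ≤ ℓ → vstar ℓ lam = 0)) :
    (∀ lam : ℝ, 0 < lam →
      ConvexOn ℝ (Icc (0 : ℝ) 1) (fun v => γ ^ 2 / (v + γ / lam))) ∧
    (∀ lam : ℝ, 0 < lam →
      AntitoneOn (fun ℓ => vstar ℓ lam) (Ici 0) ∧
      Tendsto (fun ℓ => vstar ℓ lam) (𝓝[>] 0) (𝓝 1) ∧
      Tendsto (fun ℓ => vstar ℓ lam) atTop (𝓝 0)) ∧
    (∀ ℓ : ℝ, 0 < ℓ →
      MonotoneOn (fun lam => vstar ℓ lam) (Ioi 0) ∧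
      Tendsto (fun lam => vstar ℓ lam) (𝓝[>] 0) (𝓝 0) ∧
      ∃ L : ℝ, L ≤ 1 ∧ Tendsto (fun lam => vstar ℓ lam) atTop (𝓝 L)) := by
  -- nonnegativity of vstar
  have hnn : ∀ (l lam : ℝ), 0 < lam → 0 ≤ vstar l lam := by
    intro l lam hlam
    obtain ⟨h1, h2, h3⟩ := hv l lam hlam
    by_cases hb : lam ^ 2 ≤ l
    · rw [h3 hb]
    · push_neg at hb
      by_cases ha : l ≤ (lam * γ / (lam + γ)) ^ 2
      · rw [h1 ha]; norm_num
      · push_neg at ha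
        rw [h2 ha.le hb.le]
        have hc := mix_c_pos hγ hlam
        exact mix_g_nonneg hγ hlam (lt_of_le_of_lt (by positivity) ha) hb.le
  refine ⟨?_, ?_, ?_⟩
  · -- (i) convexity
    intro lam hlam
    have hc : 0 < γ / lam := div_pos hγ hlam
    have h1 : ConvexOn ℝ (Ioi (0:ℝ)) (fun x : ℝ => γ ^ 2 • x⁻¹) := by
      have h := convexOn_zpow (𝕜 := ℝ) (-1)
      have := h.smul (by positivity : (0:ℝ) ≤ γ ^ 2)
      simpa using this
    have h2 := h1.translate_right (c := γ / lam)
    have h3 : Icc (0:ℝ) 1 ⊆ (fun z => γ / lam + z) ⁻¹' Ioi 0 := by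
      intro x hx
      simp only [mem_preimage, mem_Ioi]
      have := hx.1
      linarith
    have h4 := h2.subset h3 (convex_Icc 0 1)
    have heq : (fun v : ℝ => γ ^ 2 / (v + γ / lam))
        = ((fun x : ℝ => γ ^ 2 • x⁻¹) ∘ fun z => γ / lam + z) := by
      funext v
      simp [div_eq_mul_inv, add_comm, Function.comp]
    rw [heq]
    exact h4
  · -- (ii)
    intro lam hlam
    have hc := mix_c_pos hγ hlam
    refine ⟨?_, ?_, ?_⟩
    · -- antitone in ℓ
      intro l1 _ l2 _ hle
      show vstar l2 lam ≤ vstar l1 lam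
      obtain ⟨h11, h12, h13⟩ := hv l1 lam hlam
      obtain ⟨h21, h22, h23⟩ := hv l2 lam hlam
      by_cases hb2 : lam ^ 2 ≤ l2
      · rw [h23 hb2]; exact hnn l1 lam hlam
      push_neg at hb2
      by_cases ha2 : l2 ≤ (lam * γ / (lam + γ)) ^ 2
      · rw [h21 ha2, h11 (hle.trans ha2)]
      push_neg at ha2
      rw [h22 ha2.le hb2.le]
      by_cases ha1 : l1 ≤ (lam * γ / (lam + γ)) ^ 2
      · rw [h11 ha1]
        exact mix_g_le_one hγ hlam ha2.le
      push_neg at ha1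
      rw [h12 ha1.le (hle.trans hb2.le)]
      have hp1 : 0 < Real.sqrt l1 := Real.sqrt_pos.mpr (lt_of_le_of_lt (by positivity) ha1)
      have hss : Real.sqrt l1 ≤ Real.sqrt l2 := Real.sqrt_le_sqrt hle
      have : γ / Real.sqrt l2 ≤ γ / Real.sqrt l1 := by gcongr
      linarith
    · -- ℓ → 0⁺
      have ha_pos : 0 < (lam * γ / (lam + γ)) ^ 2 := by positivity
      refine tendsto_const_nhds.congr' ?_
      filter_upwards [Ioo_mem_nhdsGT_of_mem (⟨le_refl 0, ha_pos⟩ :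
        (0:ℝ) ∈ Ico 0 ((lam * γ / (lam + γ)) ^ 2))] with l hl
      exact ((hv l lam hlam).1 hl.2.le).symm
    · -- ℓ → ∞
      refine tendsto_const_nhds.congr' ?_
      filter_upwards [eventually_ge_atTop (lam ^ 2)] with l hl
      exact ((hv l lam hlam).2.2 hl).symm
  · -- (iii)
    intro ℓ hℓ
    refine ⟨?_, ?_, ?_⟩
    · -- monotone in lam
      intro lam1 h1m lam2 h2m hle
      show vstar ℓ lam1 ≤ vstar ℓ lam2
      have h1 : 0 < lam1 := h1m
      have h2 : 0 < lam2 := h2m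
      obtain ⟨h11, h12, h13⟩ := hv ℓ lam1 h1
      obtain ⟨h21, h22, h23⟩ := hv ℓ lam2 h2
      have hc1 := mix_c_pos hγ h1
      have hcmono : lam1 * γ / (lam1 + γ) ≤ lam2 * γ / (lam2 + γ) := by
        rw [div_le_div_iff₀ (by positivity) (by positivity)]
        nlinarith [mul_nonneg (mul_nonneg hγ.le hγ.le) (sub_nonneg.mpr hle)]
      by_cases hb1 : lam1 ^ 2 ≤ ℓ
      · rw [h13 hb1]; exact hnn ℓ lam2 h2
      push_neg at hb1
      by_cases ha1 : ℓ ≤ (lam1 * γ / (lam1 + γ)) ^ 2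
      · rw [h11 ha1, h21 (ha1.trans (pow_le_pow_left₀ hc1.le hcmono 2))]
      push_neg at ha1
      rw [h12 ha1.le hb1.le]
      by_cases ha2 : ℓ ≤ (lam2 * γ / (lam2 + γ)) ^ 2
      · rw [h21 ha2]
        exact mix_g_le_one hγ h1 ha1.le
      push_neg at ha2
      rw [h22 ha2.le (hb1.le.trans (pow_le_pow_left₀ h1.le hle 2))]
      have : γ / lam2 ≤ γ / lam1 := by gcongr
      linarith
    · -- lam → 0⁺
      have hs : 0 < Real.sqrt ℓ := Real.sqrt_pos.mpr hℓ
      refine tendsto_const_nhds.congr' ?_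
      filter_upwards [Ioo_mem_nhdsGT_of_mem (⟨le_refl 0, hs⟩ :
        (0:ℝ) ∈ Ico 0 (Real.sqrt ℓ))] with lam hlam
      have hb : lam ^ 2 ≤ ℓ := ((Real.lt_sqrt hlam.1.le).mp hlam.2).le
      exact ((hv ℓ lam hlam.1).2.2 hb).symm
    · -- lam → ∞
      by_cases hcase : ℓ < γ ^ 2
      · refine ⟨1, le_refl 1, ?_⟩
        have h0 : Tendsto (fun lam : ℝ => γ / lam) atTop (𝓝 0) :=
          Tendsto.div_atTop tendsto_const_nhds tendsto_id
        have h0' : Tendsto (fun lam : ℝ => γ / (1 + γ / lam)) atTop (𝓝 γ) := by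
          have hbase : Tendsto (fun lam : ℝ => 1 + γ / lam) atTop (𝓝 1) := by
            simpa using tendsto_const_nhds.add h0
          have := (tendsto_const_nhds : Tendsto (fun _ : ℝ => γ) atTop (𝓝 γ)).div hbase
            one_ne_zero
          rw [div_one] at this
          exact this
        have htend : Tendsto (fun lam : ℝ => (lam * γ / (lam + γ)) ^ 2) atTop (𝓝 (γ ^ 2)) := by
          have heq : ∀ᶠ lam : ℝ in atTop,
              γ / (1 + γ / lam) = lam * γ / (lam + γ) := by
            filter_upwards [eventually_gt_atTop 0] with lam hpos
            have h1 : lam ≠ 0 := hpos.ne'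
            have h2 : lam + γ ≠ 0 := by positivity
            field_simp
          exact ((h0'.congr' heq).pow 2)
        refine tendsto_const_nhds.congr' ?_
        filter_upwards [htend.eventually (eventually_gt_nhds hcase),
          eventually_gt_atTop 0] with lam hlt hpos
        exact ((hv ℓ lam hpos).1 hlt.le).symm
      · push_neg at hcase
        have hs : 0 < Real.sqrt ℓ := Real.sqrt_pos.mpr hℓ
        refine ⟨γ / Real.sqrt ℓ, ?_, ?_⟩
        · rw [div_le_one hs]
          calc γ = Real.sqrt (γ ^ 2) := (Real.sqrt_sq hγ.le).symm
          _ ≤ Real.sqrt ℓ := Real.sqrt_le_sqrt hcase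
        · have htail : Tendsto (fun lam : ℝ => γ / Real.sqrt ℓ - γ / lam) atTop
              (𝓝 (γ / Real.sqrt ℓ)) := by
            have h0 : Tendsto (fun lam : ℝ => γ / lam) atTop (𝓝 0) :=
              Tendsto.div_atTop tendsto_const_nhds tendsto_id
            simpa using tendsto_const_nhds.sub h0
          refine htail.congr' ?_
          filter_upwards [eventually_ge_atTop (Real.sqrt ℓ), eventually_gt_atTop 0]
            with lam hge hpos
          have hb : ℓ ≤ lam ^ 2 := by
            have h1 : Real.sqrt ℓ ^ 2 ≤ lam ^ 2 := pow_le_pow_left₀ (Real.sqrt_nonneg ℓ) hge 2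
            rwa [Real.sq_sqrt hℓ.le] at h1
          have hac : lam * γ / (lam + γ) ≤ γ := mix_c_le_gamma hγ hpos
          have ha : (lam * γ / (lam + γ)) ^ 2 ≤ ℓ :=
            le_trans (pow_le_pow_left₀ (by positivity) hac 2) hcase
          exact ((hv ℓ lam hpos).2.1 ha hb).symm
end
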